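/- Let I_{m,n} be the number of lattice paths consisting of 2m Dyck steps (±1 steps staying at or above level 0, starting and ending at level 0) and n horizontal steps, where horizontal steps may occur only at level 0. Then I_{m,n} satisfies the recurrence I_{m,n} = I_{m+1,n-1} - I_{m+1,n-2} for all m ≥ 0 and n ≥ 2 (with the convention I_{m,-1} = 0). -/

import Mathlib

/-- A valid path: a list of steps `+1`, `-1` (Dyck steps) and `0` (horizontal steps),
staying at or above level `0`, starting and ending at level `0`, with horizontal steps
allowed only at level `0`. -/
def IsDyckHPath (l : List ℤ) : Prop :=
  (∀ s ∈ l, s = 1 ∨ s = -1 ∨ s = 0) ∧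
  (∀ t : ℕ, 0 ≤ (l.take t).sum) ∧
  l.sum = 0 ∧
  (∀ t : ℕ, l[t]? = some 0 → (l.take t).sum = 0)

private lemma sum_take_append (A B : List ℤ) (t : ℕ) :
    ((A ++ B).take t).sum = (A.take t).sum + (B.take (t - A.length)).sum := by
  rw [List.take_append, List.sum_append]

private lemma sum_take_cons (c : ℤ) (Q : List ℤ) (t : ℕ) :
    ((c :: Q).take t).sum = if t = 0 then 0 else c + (Q.take (t - 1)).sum := by
  cases t <;> simp

private lemma sum_take_of_le (A : List ℤ) {t : ℕ} (h : A.length ≤ t) :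
    (A.take t).sum = A.sum := by rw [List.take_of_length_le h]

/-- Key surgery lemma A : gluing a Dyck path `A` and a horizontal step in front. -/
private lemma dyck_append_zero (A Q : List ℤ)
    (hmem : ∀ s ∈ A, s = 1 ∨ s = -1)
    (hps : ∀ t, 0 ≤ (A.take t).sum) (hsum : A.sum = 0) :
    IsDyckHPath (A ++ 0 :: Q) ↔ IsDyckHPath Q := by
  constructor
  · rintro ⟨h1, h2, h3, h4⟩
    refine ⟨?_, ?_, ?_, ?_⟩
    · intro s hs; exact h1 s (by simp [hs])
    · intro t
      have h := h2 (A.length + 1 + t)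
      rw [sum_take_append, sum_take_of_le A (by omega), hsum] at h
      have ht : A.length + 1 + t - A.length = t + 1 := by omega
      rw [ht, sum_take_cons] at h
      simpa using h
    · rw [List.sum_append, List.sum_cons, hsum] at h3; linarith
    · intro t hQt
      have hget : (A ++ 0 :: Q)[A.length + 1 + t]? = some 0 := by
        rw [List.getElem?_append_right (by omega)]
        have ht : A.length + 1 + t - A.length = t + 1 := by omega
        rw [ht]; simpa using hQt
      have h := h4 _ hget
      rw [sum_take_append, sum_take_of_le A (by omega), hsum] at h
      have ht : A.length + 1 + t - A.length = t + 1 := by omega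
      rw [ht, sum_take_cons] at h
      simpa using h
  · rintro ⟨h1, h2, h3, h4⟩
    refine ⟨?_, ?_, ?_, ?_⟩
    · intro s hs
      rcases List.mem_append.1 hs with h | h
      · rcases hmem s h with h' | h' <;> simp [h']
      · rcases List.mem_cons.1 h with h' | h'
        · right; right; exact h'
        · exact h1 s h'
    · intro t
      rw [sum_take_append, sum_take_cons]
      have hA := hps t
      have hQ := h2 (t - A.length - 1)
      split <;> linarith
    · rw [List.sum_append, List.sum_cons, hsum, h3]; ring
    · intro t hget
      by_cases htA : t < A.length
      · exfalso
        rw [List.getElem?_append_left htA] at hget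
        have h0 : (0:ℤ) ∈ A := List.mem_of_getElem? hget
        rcases hmem 0 h0 with h | h <;> norm_num at h
      · push_neg at htA
        rw [List.getElem?_append_right htA] at hget
        rw [sum_take_append]
        rcases Nat.eq_or_lt_of_le htA with heq | hlt
        · subst heq
          simp [List.take_length, hsum]
        · obtain ⟨v, hv⟩ : ∃ v, t - A.length = v + 1 := ⟨t - A.length - 1, by omega⟩
          rw [hv, List.getElem?_cons_succ] at hget
          have := h4 v hget
          rw [hv, sum_take_cons, sum_take_of_le A (by omega), hsum]
          simp [this]

/-- Key surgery lemma B : wrapping an up and down step around a Dyck path `A`. -/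
private lemma dyck_cons_up_down (A Q : List ℤ)
    (hmem : ∀ s ∈ A, s = 1 ∨ s = -1)
    (hps : ∀ t, 0 ≤ (A.take t).sum) (hsum : A.sum = 0) :
    IsDyckHPath (1 :: (A ++ -1 :: Q)) ↔ IsDyckHPath Q := by
  constructor
  · rintro ⟨h1, h2, h3, h4⟩
    refine ⟨?_, ?_, ?_, ?_⟩
    · intro s hs; exact h1 s (by simp [hs])
    · intro t
      have h := h2 (A.length + 2 + t)
      rw [sum_take_cons] at h
      simp only [show A.length + 2 + t ≠ 0 by omega, if_false] at h
      rw [show A.length + 2 + t - 1 = A.length + 1 + t by omega,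
        sum_take_append, sum_take_of_le A (by omega), hsum,
        show A.length + 1 + t - A.length = t + 1 by omega, sum_take_cons] at h
      simp at h
      linarith
    · rw [List.sum_cons, List.sum_append, List.sum_cons, hsum] at h3; linarith
    · intro t hQt
      have hget : (1 :: (A ++ -1 :: Q))[A.length + 2 + t]? = some 0 := by
        rw [show A.length + 2 + t = (A.length + 1 + t) + 1 by omega, List.getElem?_cons_succ,
          List.getElem?_append_right (by omega : A.length ≤ A.length + 1 + t),
          show A.length + 1 + t - A.length = t + 1 by omega, List.getElem?_cons_succ]
        exact hQt
      have h := h4 _ hget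
      rw [sum_take_cons] at h
      simp only [show A.length + 2 + t ≠ 0 by omega, if_false] at h
      rw [show A.length + 2 + t - 1 = A.length + 1 + t by omega,
        sum_take_append, sum_take_of_le A (by omega), hsum,
        show A.length + 1 + t - A.length = t + 1 by omega, sum_take_cons] at h
      simp at h
      linarith
  · rintro ⟨h1, h2, h3, h4⟩
    refine ⟨?_, ?_, ?_, ?_⟩
    · intro s hs
      rcases List.mem_cons.1 hs with h | h
      · left; exact h
      rcases List.mem_append.1 h with h | h
      · rcases hmem s h with h' | h' <;> simp [h']
      rcases List.mem_cons.1 h with h' | h'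
      · right; left; exact h'
      · exact h1 s h'
    · intro t
      rw [sum_take_cons]
      split
      · exact le_refl 0
      · rw [sum_take_append, sum_take_cons]
        have hA := hps (t - 1)
        have hA2 := sum_take_of_le A (t := t - 1)
        have hQ := h2 (t - 1 - A.length - 1)
        by_cases h' : t - 1 - A.length = 0
        · rw [h']; simp; linarith
        · simp only [h', if_false]
          have : (A.take (t-1)).sum = 0 := by
            rw [sum_take_of_le A (by omega), hsum]
          rw [this]; linarith
    · rw [List.sum_cons, List.sum_append, List.sum_cons, hsum, h3]; ring
    · intro t hget
      match t, hget with
      | 0, hget => simp at hget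
      | (u+1), hget =>
        rw [List.getElem?_cons_succ] at hget
        rw [sum_take_cons]
        simp only [Nat.succ_ne_zero, if_false, Nat.add_sub_cancel]
        by_cases huA : u < A.length
        · exfalso
          rw [List.getElem?_append_left huA] at hget
          have h0 : (0:ℤ) ∈ A := List.mem_of_getElem? hget
          rcases hmem 0 h0 with h | h <;> norm_num at h
        · push_neg at huA
          rw [List.getElem?_append_right huA] at hget
          rw [sum_take_append]
          rcases Nat.eq_or_lt_of_le huA with heq | hlt
          · exfalso
            rw [← heq, Nat.sub_self] at hget
            simp at hget
          · obtain ⟨v, hv⟩ : ∃ v, u - A.length = v + 1 := ⟨u - A.length - 1, by omega⟩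
            rw [hv, List.getElem?_cons_succ] at hget
            have := h4 v hget
            rw [hv, sum_take_cons, sum_take_of_le A (by omega), hsum]
            simp [this]

/-- Decomposition of a valid path containing a horizontal step at its first horizontal step. -/
private lemma takeWhile_decomp (l : List ℤ) (hl : IsDyckHPath l) (h0 : (0:ℤ) ∈ l) :
    l = l.takeWhile (fun x => x != 0) ++ 0 :: (l.dropWhile (fun x => x != 0)).tail ∧
    (∀ s ∈ l.takeWhile (fun x => x != 0), s = 1 ∨ s = -1) ∧
    (∀ t, 0 ≤ ((l.takeWhile (fun x => x != 0)).take t).sum) ∧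
    (l.takeWhile (fun x => x != 0)).sum = 0 := by
  set A := l.takeWhile (fun x => x != 0) with hA
  set D := l.dropWhile (fun x => x != 0) with hD
  have hAD : A ++ D = l := List.takeWhile_append_dropWhile
  have hDne : D ≠ [] := by
    intro h
    rw [h, List.append_nil] at hAD
    have h0' : (0:ℤ) ∈ A := hAD ▸ h0
    have := List.mem_takeWhile_imp (hA ▸ h0')
    simp at this
  have hhead : D.head hDne = 0 := by
    have := List.head_dropWhile_not (fun x => x != 0) (l := l) (hD ▸ hDne)
    simpa using this
  have hl2 : l = A ++ 0 :: D.tail := by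
    conv_lhs => rw [← hAD, ← List.cons_head_tail hDne, hhead]
  have hmem : ∀ s ∈ A, s = 1 ∨ s = -1 := by
    intro s hs
    have h1 := List.mem_takeWhile_imp hs
    have h2 : s ∈ l := by rw [← hAD]; exact List.mem_append_left _ hs
    rcases hl.1 s h2 with h | h | h
    · left; exact h
    · right; exact h
    · simp [h] at h1
  have hsum : A.sum = 0 := by
    have hget : l[A.length]? = some 0 := by
      rw [hl2, List.getElem?_append_right (le_refl _), Nat.sub_self]; simp
    have h := hl.2.2.2 _ hget
    rw [hl2, sum_take_append, Nat.sub_self] at h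
    simpa [List.take_length] using h
  have hps : ∀ t, 0 ≤ (A.take t).sum := by
    intro t
    rcases le_or_gt t A.length with h | h
    · have h' := hl.2.1 t
      rw [hl2, sum_take_append, Nat.sub_eq_zero_of_le h] at h'
      simpa using h'
    · rw [sum_take_of_le A (le_of_lt h), hsum]
  exact ⟨hl2, hmem, hps, hsum⟩

open Classical in
/-- First-return index of a path. -/
private noncomputable def kaux (p : List ℤ) : ℕ :=
  if h : ∃ t, 0 < t ∧ (p.take t).sum = 0 then Nat.find h else 0

private lemma kaux_eq (A Q : List ℤ) (hps : ∀ t, 0 ≤ (A.take t).sum) (hsum : A.sum = 0) :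
    kaux (1 :: (A ++ -1 :: Q)) = A.length + 2 := by
  have hpred : 0 < A.length + 2 ∧ (((1 : ℤ) :: (A ++ -1 :: Q)).take (A.length + 2)).sum = 0 := by
    refine ⟨by omega, ?_⟩
    rw [sum_take_cons]
    simp only [show A.length + 2 ≠ 0 by omega, if_false]
    rw [show A.length + 2 - 1 = A.length + 1 by omega, sum_take_append,
      sum_take_of_le A (by omega), hsum,
      show A.length + 1 - A.length = 1 from by omega, sum_take_cons]
    norm_num
  have hex : ∃ t, 0 < t ∧ (((1:ℤ) :: (A ++ -1 :: Q)).take t).sum = 0 := ⟨_, hpred⟩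
  rw [kaux]
  rw [dif_pos hex, Nat.find_eq_iff]
  refine ⟨hpred, ?_⟩
  rintro t ht ⟨ht0, hts⟩
  rw [sum_take_cons] at hts
  simp only [show t ≠ 0 by omega, if_false] at hts
  rw [sum_take_append, show t - 1 - A.length = 0 from by omega] at hts
  simp at hts
  have := hps (t - 1)
  linarith

private lemma first_return_decomp (p : List ℤ) (hp : IsDyckHPath p) (h1 : p.head? = some 1) :
    ∃ A Q : List ℤ, p = 1 :: (A ++ -1 :: Q) ∧ A = p.tail.take (kaux p - 2) ∧
      Q = p.drop (kaux p) ∧ (∀ s ∈ A, s = 1 ∨ s = -1) ∧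
      (∀ t, 0 ≤ (A.take t).sum) ∧ A.sum = 0 := by
  obtain ⟨r, rfl⟩ : ∃ r, p = 1 :: r := by
    cases p with
    | nil => simp at h1
    | cons c r =>
      simp only [List.head?_cons, Option.some.injEq] at h1
      exact ⟨r, by rw [h1]⟩
  have hlen : 0 < ((1:ℤ) :: r).length := by simp
  have hex : ∃ t, 0 < t ∧ (((1:ℤ) :: r).take t).sum = 0 :=
    ⟨((1:ℤ) :: r).length, hlen, by rw [List.take_length]; exact hp.2.2.1⟩
  have hk : kaux (1 :: r) = Nat.find hex := dif_pos hex
  set k := Nat.find hex with hkdef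
  have hk0 : 0 < k := (Nat.find_spec hex).1
  have hkz : (((1:ℤ) :: r).take k).sum = 0 := (Nat.find_spec hex).2
  have hmin : ∀ t, 0 < t → t < k → (((1:ℤ) :: r).take t).sum ≠ 0 := by
    intro t ht0 htk hcon
    exact Nat.find_min hex htk ⟨ht0, hcon⟩
  have hpos : ∀ t, 0 < t → t < k → 1 ≤ (((1:ℤ) :: r).take t).sum := by
    intro t ht0 htk
    have h := hp.2.1 t
    have h' := hmin t ht0 htk
    omega
  have hk1 : 2 ≤ k := by
    by_contra h
    have hk1' : k = 1 := by omega
    rw [hk1'] at hkz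
    simp at hkz
  have hfind : 0 < ((1:ℤ) :: r).length ∧ ((((1:ℤ) :: r)).take (((1:ℤ) :: r).length)).sum = 0 :=
    ⟨hlen, by rw [List.take_length]; exact hp.2.2.1⟩
  have hklen : k ≤ r.length + 1 := by
    have h := Nat.find_min' hex hfind
    simpa only [List.length_cons] using h
  have hps_cons : ∀ t, (((1:ℤ) :: r).take (t+1)).sum = 1 + (r.take t).sum := by
    intro t; rw [List.take_succ_cons]; simp
  have hkm1 : k - 1 < ((1:ℤ) :: r).length := by simp; omega
  have hstep : (((1:ℤ) :: r).take k).sum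
      = (((1:ℤ) :: r).take (k-1)).sum + ((1:ℤ) :: r)[k-1] := by
    conv_lhs => rw [show k = (k-1)+1 by omega, List.take_succ, List.getElem?_eq_getElem hkm1]
    rw [List.sum_append]
    simp only [Option.toList_some, List.sum_cons, List.sum_nil]
    ring
  have hpsk1 : 1 ≤ (((1:ℤ) :: r).take (k-1)).sum := hpos (k-1) (by omega) (by omega)
  have hneg : ((1:ℤ) :: r)[k-1] = -1 ∧ (((1:ℤ) :: r).take (k-1)).sum = 1 := by
    rcases hp.1 _ (List.getElem_mem hkm1) with h | h | h
    · exfalso; rw [h] at hstep; omega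
    · exact ⟨h, by rw [h] at hstep; omega⟩
    · exfalso
      have h4 := hp.2.2.2 (k-1) (by rw [List.getElem?_eq_getElem hkm1, h])
      omega
  have hr2 : k - 2 < r.length := by omega
  have hrk2 : r[k-2] = -1 := by
    have h : ((1:ℤ) :: r)[k-1]? = some (-1) := by
      rw [List.getElem?_eq_getElem hkm1, hneg.1]
    rw [show k-1 = (k-2)+1 by omega, List.getElem?_cons_succ,
      List.getElem?_eq_getElem hr2] at h
    exact Option.some.inj h
  have key : ∀ t, t ≤ k - 2 → ((r.take (k-2)).take t).sum = (((1:ℤ) :: r).take (t+1)).sum - 1 := by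
    intro t ht
    rw [List.take_take, inf_eq_left.2 ht, hps_cons]
    ring
  have hAlen : (r.take (k-2)).length = k - 2 := by
    rw [List.length_take]; omega
  have hsumA : (r.take (k-2)).sum = 0 := by
    have h := key (k-2) le_rfl
    rw [List.take_take, inf_idem, show k-2+1 = k-1 by omega, hneg.2] at h
    simpa only [List.length_cons, sub_self] using h
  have hpsA : ∀ t, 0 ≤ ((r.take (k-2)).take t).sum := by
    intro t
    rcases le_or_gt t (k-2) with h | h
    · rw [key t h]
      have := hpos (t+1) (by omega) (by omega)
      linarith
    · rw [sum_take_of_le _ (by omega : (r.take (k-2)).length ≤ t), hsumA]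
  have hmemA : ∀ s ∈ r.take (k-2), s = 1 ∨ s = -1 := by
    intro s hs
    have hsl : s ∈ (1:ℤ) :: r := List.mem_cons_of_mem _ (List.take_subset _ _ hs)
    rcases hp.1 s hsl with h | h | h
    · left; exact h
    · right; exact h
    · exfalso
      obtain ⟨i, hi, hieq⟩ := List.getElem_of_mem hs
      have hir : i < r.length := by rw [List.length_take] at hi; omega
      have hri : r[i] = 0 := by rw [← List.getElem_take (xs := r) (j := k-2) (h := hi), hieq, h]
      have hgp : ((1:ℤ) :: r)[i+1]? = some 0 := by
        rw [List.getElem?_eq_getElem (by simp; omega), List.getElem_cons_succ, hri]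
      have h4 := hp.2.2.2 (i+1) hgp
      have h5 := hpos (i+1) (by omega) (by rw [List.length_take] at hi; omega)
      omega
  refine ⟨r.take (k-2), r.drop (k-1), ?_, ?_, ?_, hmemA, hpsA, hsumA⟩
  · conv_lhs => rw [← List.take_append_drop (k-2) r,
      List.drop_eq_getElem_cons hr2, hrk2, show k-2+1 = k-1 by omega]
  · rw [hk]; simp
  · rw [hk]
    conv_rhs => rw [show k = (k-1)+1 by omega, List.drop_succ_cons]

private def phiL (l : List ℤ) : List ℤ :=
  1 :: (l.takeWhile (fun x => x != 0) ++ -1 :: (l.dropWhile (fun x => x != 0)).tail)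

private noncomputable def psiL (p : List ℤ) : List ℤ :=
  p.tail.take (kaux p - 2) ++ 0 :: p.drop (kaux p)

private lemma phiL_def (l : List ℤ) : phiL l
    = 1 :: (l.takeWhile (fun x => x != 0) ++ -1 :: (l.dropWhile (fun x => x != 0)).tail) := rfl

private lemma psiL_def (p : List ℤ) : psiL p
    = p.tail.take (kaux p - 2) ++ 0 :: p.drop (kaux p) := rfl

private lemma takeWhile_eq_of (A Q : List ℤ) (h : ∀ x ∈ A, x ≠ 0) :
    (A ++ 0 :: Q).takeWhile (fun x => x != 0) = A ∧
    (A ++ 0 :: Q).dropWhile (fun x => x != 0) = 0 :: Q := by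
  induction A with
  | nil => simp
  | cons a A ih =>
    have ha : a ≠ 0 := h a (List.mem_cons_self)
    have ih' := ih (fun x hx => h x (List.mem_cons_of_mem _ hx))
    refine ⟨?_, ?_⟩
    · rw [List.cons_append, List.takeWhile_cons]
      simp [ha, ih'.1]
    · rw [List.cons_append, List.dropWhile_cons]
      simp [ha, ih'.2]

private lemma phi_spec (l : List ℤ) (hl : IsDyckHPath l) (h0 : (0:ℤ) ∈ l) :
    IsDyckHPath (phiL l) ∧ (phiL l).count 0 + 1 = l.count 0 ∧
    (phiL l).length = l.length + 1 ∧ (phiL l).head? = some 1 ∧ psiL (phiL l) = l := by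
  obtain ⟨hl2, hmem, hps, hsum⟩ := takeWhile_decomp l hl h0
  set A := l.takeWhile (fun x => x != 0) with hAdef
  set Q := (l.dropWhile (fun x => x != 0)).tail with hQdef
  have hphi : phiL l = 1 :: (A ++ -1 :: Q) := rfl
  have hA0 : A.count 0 = 0 := by
    rw [List.count_eq_zero]
    intro h
    rcases hmem 0 h with h' | h' <;> norm_num at h'
  refine ⟨?_, ?_, ?_, rfl, ?_⟩
  · rw [hphi]
    exact (dyck_cons_up_down A Q hmem hps hsum).2
      ((dyck_append_zero A Q hmem hps hsum).1 (hl2 ▸ hl))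
  · rw [hphi]
    conv_rhs => rw [hl2]
    simp [List.count_cons, List.count_append, hA0]
  · rw [hphi]
    conv_rhs => rw [hl2]
    simp [List.length_append]
  · have hk := kaux_eq A Q hps hsum
    rw [psiL_def, hphi, hk, List.tail_cons, show A.length + 2 - 2 = A.length by omega,
      List.take_left, show A.length + 2 = (A.length + 1) + 1 by omega, List.drop_succ_cons,
      List.drop_append, List.drop_of_length_le (by omega), List.nil_append,
      show A.length + 1 - A.length = 1 by omega]
    simp only [List.drop_succ_cons, List.drop_zero]
    exact hl2.symm

private lemma psi_spec (p : List ℤ) (hp : IsDyckHPath p) (h1 : p.head? = some 1) :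
    IsDyckHPath (psiL p) ∧ (psiL p).count 0 = p.count 0 + 1 ∧
    (psiL p).length + 1 = p.length ∧ phiL (psiL p) = p := by
  obtain ⟨A, Q, hpeq, hAQ, hQQ, hmem, hps, hsum⟩ := first_return_decomp p hp h1
  have hpsi : psiL p = A ++ 0 :: Q := by rw [psiL_def, ← hAQ, ← hQQ]
  have hA0 : A.count 0 = 0 := by
    rw [List.count_eq_zero]
    intro h
    rcases hmem 0 h with h' | h' <;> norm_num at h'
  refine ⟨?_, ?_, ?_, ?_⟩
  · rw [hpsi]
    exact (dyck_append_zero A Q hmem hps hsum).2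
      ((dyck_cons_up_down A Q hmem hps hsum).1 (hpeq ▸ hp))
  · rw [hpsi]
    conv_rhs => rw [hpeq]
    simp [List.count_cons, List.count_append, hA0]
  · rw [hpsi]
    conv_rhs => rw [hpeq]
    simp [List.length_append]
  · have h0A : ∀ x ∈ A, x ≠ 0 := fun x hx => by
      rcases hmem x hx with h | h <;> simp [h]
    obtain ⟨ht, hd⟩ := takeWhile_eq_of A Q h0A
    rw [hpsi, phiL_def, ht, hd, List.tail_cons]
    exact hpeq.symm

private lemma finite_paths (m n : ℕ) :
    Finite {l : List ℤ // IsDyckHPath l ∧ l.count 0 = n ∧ l.length = 2 * m + n} := by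
  have hσ : Finite {x : ℤ // x = 1 ∨ x = -1 ∨ x = 0} := by
    have h : {x : ℤ | x = 1 ∨ x = -1 ∨ x = 0} = {1, -1, 0} := by
      ext x; simp [Set.mem_insert_iff]
    have : ({x : ℤ | x = 1 ∨ x = -1 ∨ x = 0}).Finite := by
      rw [h]
      exact ((Set.finite_singleton _).insert _).insert _
    exact this.to_subtype
  apply Finite.of_injective
    (f := fun (l : {l : List ℤ // IsDyckHPath l ∧ l.count 0 = n ∧ l.length = 2 * m + n})
      (i : Fin (2 * m + n)) =>
      (⟨l.1[(i : ℕ)]'(by rw [l.2.2.2]; exact i.2),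
        l.2.1.1 _ (List.getElem_mem _)⟩ : {x : ℤ // x = 1 ∨ x = -1 ∨ x = 0}))
  intro l1 l2 hf
  apply Subtype.ext
  apply List.ext_getElem (by rw [l1.2.2.2, l2.2.2.2])
  intro i h1 h2
  have h := congrFun hf ⟨i, by rw [← l1.2.2.2]; exact h1⟩
  simpa [Subtype.ext_iff] using h

private lemma card_step1 (m k : ℕ) :
    Nat.card {l : List ℤ // IsDyckHPath l ∧ l.count 0 = k + 2 ∧ l.length = 2 * m + (k + 2)}
      = Nat.card {l : {l : List ℤ // IsDyckHPath l ∧ l.count 0 = k + 1 ∧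
          l.length = 2 * (m + 1) + (k + 1)} // l.1.head? = some 1} := by
  apply Nat.card_congr
  refine ⟨fun l => ⟨⟨phiL l.1, ?_⟩, ?_⟩, fun p => ⟨psiL p.1.1, ?_⟩, ?_, ?_⟩
  · obtain ⟨h1, h2, h3, h4, h5⟩ := phi_spec l.1 l.2.1
      (List.count_pos_iff.1 (by rw [l.2.2.1]; omega))
    have hc := l.2.2.1
    have hlen := l.2.2.2
    exact ⟨h1, by omega, by omega⟩
  · exact (phi_spec l.1 l.2.1 (List.count_pos_iff.1 (by rw [l.2.2.1]; omega))).2.2.2.1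
  · obtain ⟨h1, h2, h3, h4⟩ := psi_spec p.1.1 p.1.2.1 p.2
    have hc := p.1.2.2.1
    have hlen := p.1.2.2.2
    exact ⟨h1, by omega, by omega⟩
  · intro l
    apply Subtype.ext
    exact (phi_spec l.1 l.2.1 (List.count_pos_iff.1 (by rw [l.2.2.1]; omega))).2.2.2.2
  · intro p
    apply Subtype.ext
    apply Subtype.ext
    exact (psi_spec p.1.1 p.1.2.1 p.2).2.2.2

private lemma cons_zero_iff (Q : List ℤ) : IsDyckHPath (0 :: Q) ↔ IsDyckHPath Q := by
  simpa using dyck_append_zero [] Q (by simp) (fun t => by simp) rfl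

private lemma head_zero (p : List ℤ) (hp : IsDyckHPath p) (hne : p ≠ [])
    (h1 : ¬ p.head? = some 1) : p = 0 :: p.tail := by
  cases p with
  | nil => exact absurd rfl hne
  | cons c r =>
    rcases hp.1 c (List.mem_cons_self) with h | h | h
    · exact absurd (by rw [h]; rfl) h1
    · exfalso
      have h2 := hp.2.1 1
      rw [List.take_succ_cons, List.take_zero] at h2
      simp [h] at h2
    · rw [h]; rfl

private lemma card_step2 (m k : ℕ) :
    Nat.card {l : {l : List ℤ // IsDyckHPath l ∧ l.count 0 = k + 1 ∧
        l.length = 2 * (m + 1) + (k + 1)} // ¬ l.1.head? = some 1}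
      = Nat.card {l : List ℤ // IsDyckHPath l ∧ l.count 0 = k ∧
          l.length = 2 * (m + 1) + k} := by
  apply Nat.card_congr
  have key : ∀ p : {l : {l : List ℤ // IsDyckHPath l ∧ l.count 0 = k + 1 ∧
      l.length = 2 * (m + 1) + (k + 1)} // ¬ l.1.head? = some 1},
      p.1.1 = 0 :: p.1.1.tail := by
    intro p
    refine head_zero p.1.1 p.1.2.1 ?_ p.2
    intro h
    have hl := p.1.2.2.2
    rw [h] at hl
    simp at hl
  refine ⟨fun p => ⟨p.1.1.tail, ?_, ?_, ?_⟩, fun l => ⟨⟨0 :: l.1, ?_, ?_, ?_⟩, by simp⟩, ?_, ?_⟩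
  · exact (cons_zero_iff _).1 (key p ▸ p.1.2.1)
  · have hc := p.1.2.2.1
    rw [key p] at hc
    simp [List.count_cons] at hc
    omega
  · have hl := p.1.2.2.2
    have h2 := congrArg List.length (key p)
    simp only [List.length_cons] at h2
    omega
  · exact (cons_zero_iff _).2 l.2.1
  · simp [List.count_cons, l.2.2.1]
  · simp [l.2.2.2]; omega
  · intro p
    apply Subtype.ext
    apply Subtype.ext
    exact (key p).symm
  · intro l
    apply Subtype.ext
    rfl

/-- `I m n` is the number of paths with `2m` Dyck steps and `n` horizontal steps, the
horizontal steps occurring only at level `0`. -/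
noncomputable def pathCount (m n : ℕ) : ℕ :=
  Nat.card {l : List ℤ // IsDyckHPath l ∧ l.count 0 = n ∧ l.length = 2 * m + n}

/-- Recurrence for the path counts: `I_{m,n} = I_{m+1,n-1} - I_{m+1,n-2}` for `n ≥ 2`. -/
theorem pathCount_recurrence (m n : ℕ) (hn : 2 ≤ n) :
    (pathCount m n : ℤ) = pathCount (m + 1) (n - 1) - pathCount (m + 1) (n - 2) := by
  obtain ⟨k, rfl⟩ : ∃ k, n = k + 2 := ⟨n - 2, by omega⟩
  rw [show k + 2 - 1 = k + 1 from rfl, show k + 2 - 2 = k from rfl]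
  haveI := finite_paths (m + 1) (k + 1)
  classical
  have hsplit : pathCount (m + 1) (k + 1) = pathCount m (k + 2) + pathCount (m + 1) k := by
    unfold pathCount
    rw [card_step1 m k, ← card_step2 m k, ← Nat.card_sum]
    exact Nat.card_congr (Equiv.sumCompl
      (fun l : {l : List ℤ // IsDyckHPath l ∧ l.count 0 = k + 1 ∧
        l.length = 2 * (m + 1) + (k + 1)} => l.1.head? = some 1)).symm
  rw [hsplit]
  push_cast
  ring
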